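/- Let D ≤ N be positive integers and let C_1,…,C_N be real numbers with 0 ≤ C_i ≤ 1 for all i and Σ_{i=1}^N C_i = D. Then there exists a D×N real semiorthogonal matrix W (i.e., W W^T = I_D) whose i-th column w_i satisfies ‖w_i‖² = C_i for all i; in particular, C_i(W) = C_i for all i. -/

import Mathlib

open scoped BigOperators
open Matrix

/-- The capacity of feature `i` for an embedding matrix `W`:
`C_i = (w_i·w_i)² / (∑_j (w_i·w_j)²)`, with `C_i = 0` when `w_i = 0`
(automatic from `0 / 0 = 0`). -/
noncomputable def capacity {D N : ℕ} (W : Matrix (Fin D) (Fin N) ℝ) (i : Fin N) : ℝ :=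
  (∑ a, W a i * W a i) ^ 2 / ∑ j, (∑ a, W a i * W a j) ^ 2


lemma sum_inner_sq_eq {D N : ℕ} (W : Matrix (Fin D) (Fin N) ℝ) (hW : W * Wᵀ = 1) (i : Fin N) :
    ∑ j, (∑ a, W a i * W a j) ^ 2 = ∑ a, W a i * W a i := by
  have hPP : (Wᵀ * W) * (Wᵀ * W) = Wᵀ * W := by
    rw [Matrix.mul_assoc, ← Matrix.mul_assoc W, hW, Matrix.one_mul]
  have h1 : ((Wᵀ * W) * (Wᵀ * W)) i i = ∑ j, (∑ a, W a i * W a j) ^ 2 := by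
    simp only [Matrix.mul_apply, Matrix.transpose_apply]
    refine Finset.sum_congr rfl fun j _ => ?_
    rw [sq]
    congr 1
    exact Finset.sum_congr rfl fun a _ => mul_comm _ _
  have h2 : (Wᵀ * W) i i = ∑ a, W a i * W a i := by
    simp [Matrix.mul_apply, Matrix.transpose_apply]
  rw [← h1, hPP, h2]


lemma complement_exists {ι : Type} [Fintype ι] [DecidableEq ι] {d e : ℕ}
    (hcard : d + e = Fintype.card ι)
    (V : Matrix (Fin d) ι ℝ) (hV : V * Vᵀ = 1) :
    ∃ W : Matrix (Fin e) ι ℝ, W * Wᵀ = 1 ∧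
      ∀ x, ∑ a, W a x * W a x = 1 - ∑ a, V a x * V a x := by
  classical
  have hfin : Module.finrank ℝ (EuclideanSpace ℝ ι) = Fintype.card (Fin d ⊕ Fin e) := by
    simp [finrank_euclideanSpace, hcard]
  set v : Fin d ⊕ Fin e → EuclideanSpace ℝ ι :=
    Sum.elim (fun a => (WithLp.toLp 2 (fun x => V a x) : EuclideanSpace ℝ ι)) 0 with hv
  have hinner : ∀ a b : Fin d, (inner ℝ (v (Sum.inl a)) (v (Sum.inl b)) : ℝ) = (V * Vᵀ) a b := by
    intro a b
    rw [hv]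
    simp only [Sum.elim_inl, PiLp.inner_apply, RCLike.inner_apply, conj_trivial]
    simp [Matrix.mul_apply, Matrix.transpose_apply, mul_comm]
  have hrestrict : Orthonormal ℝ ((Set.range (Sum.inl : Fin d → Fin d ⊕ Fin e)).restrict v) := by
    rw [orthonormal_iff_ite]
    rintro ⟨p, hp⟩ ⟨q, hq⟩
    obtain ⟨a, rfl⟩ := hp
    obtain ⟨b, rfl⟩ := hq
    change inner ℝ (v (Sum.inl a)) (v (Sum.inl b)) = _
    rw [hinner, hV]
    by_cases h : a = b
    · subst h; simp
    · have h2 : (⟨Sum.inl a, ⟨a, rfl⟩⟩ : Set.range (Sum.inl : Fin d → Fin d ⊕ Fin e)) ≠ ⟨Sum.inl b, ⟨b, rfl⟩⟩ := by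
        intro hh; exact h (Sum.inl_injective (congrArg Subtype.val hh))
      simp [Matrix.one_apply, h, h2]
  obtain ⟨b, hb⟩ := hrestrict.exists_orthonormalBasis_extension_of_card_eq hfin
  refine ⟨Matrix.of fun a x => b (Sum.inr a) x, ?_, ?_⟩
  · ext a a'
    have := (orthonormal_iff_ite (𝕜 := ℝ)).mp b.orthonormal (Sum.inr a) (Sum.inr a')
    simp only [PiLp.inner_apply, RCLike.inner_apply, conj_trivial] at this
    by_cases h : a = a'
    · subst h; simpa [Matrix.mul_apply, Matrix.one_apply, Matrix.of_apply] using this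
    · have h2 : (Sum.inr a : Fin d ⊕ Fin e) ≠ Sum.inr a' := by simp [h]
      simp only [Matrix.mul_apply, Matrix.transpose_apply, Matrix.one_apply, Matrix.of_apply]
      rw [if_neg h]
      simpa [h2, mul_comm] using this
  · intro x
    have hpars := b.sum_inner_mul_inner (EuclideanSpace.single x (1:ℝ)) (EuclideanSpace.single x (1:ℝ))
    have hbk : ∀ k, (inner ℝ (EuclideanSpace.single x (1:ℝ)) (b k) : ℝ) = b k x := by
      intro k
      rw [EuclideanSpace.inner_single_left]
      simp
    have hbk' : ∀ k, (inner ℝ (b k) (EuclideanSpace.single x (1:ℝ)) : ℝ) = b k x := by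
      intro k
      rw [EuclideanSpace.inner_single_right]
      simp
    have hone : (inner ℝ (EuclideanSpace.single x (1:ℝ)) (EuclideanSpace.single x (1:ℝ)) : ℝ) = 1 := by
      rw [EuclideanSpace.inner_single_left]
      simp [EuclideanSpace.single_apply]
    rw [hone] at hpars
    simp only [hbk, hbk'] at hpars
    rw [Fintype.sum_sum_type] at hpars
    have hVb : ∀ a : Fin d, b (Sum.inl a) x = V a x := by
      intro a
      rw [hb _ ⟨a, rfl⟩, hv]
      simp
    simp only [hVb] at hpars
    simp only [Matrix.of_apply]
    linarith [hpars]

lemma split_step {ι : Type} [Fintype ι] [DecidableEq ι] {D : ℕ} (C : ι → ℝ)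
    (h0 : ∀ x, 0 ≤ C x) (i j : ι) (hij : i ≠ j)
    (W' : Matrix (Fin D) {x : ι // x ≠ j} ℝ) (hW' : W' * W'ᵀ = 1)
    (hcol : ∀ x : {x : ι // x ≠ j},
      ∑ a, W' a x * W' a x = (if (x : ι) = i then C i + C j else C (x : ι))) :
    ∃ W : Matrix (Fin D) ι ℝ, W * Wᵀ = 1 ∧ ∀ x, ∑ a, W a x * W a x = C x := by
  classical
  have hs0 : (0:ℝ) ≤ C i + C j := add_nonneg (h0 i) (h0 j)
  set f : ι → {x : ι // x ≠ j} := fun x => if h : x = j then ⟨i, hij⟩ else ⟨x, h⟩ with hf_def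
  have hfi : f i = ⟨i, hij⟩ := by simp [hf_def, hij]
  have hfj : f j = ⟨i, hij⟩ := by simp [hf_def]
  have hfx : ∀ x (h : x ≠ j), f x = ⟨x, h⟩ := by intro x h; simp [hf_def, h]
  set c : ι → ℝ := fun x =>
    if x = i then Real.sqrt (C i / (C i + C j))
    else if x = j then Real.sqrt (C j / (C i + C j)) else 1 with hc_def
  have hci : c i = Real.sqrt (C i / (C i + C j)) := by simp [hc_def]
  have hcj : c j = Real.sqrt (C j / (C i + C j)) := by simp [hc_def, hij.symm]
  have hcx : ∀ x, x ≠ i → x ≠ j → c x = 1 := by intro x h1 h2; simp [hc_def, h1, h2]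
  have hcoli : ∑ a, W' a ⟨i, hij⟩ * W' a ⟨i, hij⟩ = C i + C j := by
    have h := hcol ⟨i, hij⟩
    rwa [if_pos rfl] at h
  have hzero : C i + C j = 0 → ∀ a, W' a ⟨i, hij⟩ = 0 := by
    intro hs a
    rw [hs] at hcoli
    have h2 := Finset.sum_eq_zero_iff_of_nonneg
      (fun b (_ : b ∈ Finset.univ) => mul_self_nonneg (W' b ⟨i, hij⟩)) |>.mp hcoli a (Finset.mem_univ a)
    nlinarith [h2]
  have hcsum : C i + C j ≠ 0 → c i ^ 2 + c j ^ 2 = 1 := by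
    intro hs
    rw [hci, hcj, Real.sq_sqrt (div_nonneg (h0 i) hs0), Real.sq_sqrt (div_nonneg (h0 j) hs0),
      ← add_div]
    exact div_self hs
  refine ⟨Matrix.of fun a x => c x * W' a (f x), ?_, ?_⟩
  · ext a b
    simp only [Matrix.mul_apply, Matrix.transpose_apply, Matrix.of_apply]
    have key : ∑ x : ι, (c x * W' a (f x)) * (c x * W' b (f x))
        = ∑ x' : {x : ι // x ≠ j}, W' a x' * W' b x' := by
      set F : ι → ℝ := fun x => (c x * W' a (f x)) * (c x * W' b (f x)) with hF
      set G : ι → ℝ := fun x => W' a (f x) * W' b (f x) with hG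
      have hRHS : ∑ x' : {x : ι // x ≠ j}, W' a x' * W' b x' = ∑ x ∈ Finset.univ.erase j, G x := by
        have h1 : ∀ x' : {x : ι // x ≠ j}, W' a x' * W' b x' = G x'.1 := by
          intro x'
          simp only [hG]
          rw [hfx x'.1 x'.2]
        rw [Finset.sum_congr rfl (fun x' _ => h1 x')]
        exact (Finset.sum_subtype (Finset.univ.erase j) (p := fun x => x ≠ j)
          (fun x => by simp) G).symm
      rw [hRHS]
      have hjmem : j ∈ (Finset.univ : Finset ι) := Finset.mem_univ j
      have himem : i ∈ (Finset.univ : Finset ι).erase j :=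
        Finset.mem_erase.mpr ⟨hij, Finset.mem_univ i⟩
      rw [← Finset.add_sum_erase _ F hjmem, ← Finset.add_sum_erase _ F himem,
        ← Finset.add_sum_erase _ G himem]
      have hrest : ∑ x ∈ (Finset.univ.erase j).erase i, F x
          = ∑ x ∈ (Finset.univ.erase j).erase i, G x := by
        refine Finset.sum_congr rfl fun x hx => ?_
        have hxi : x ≠ i := (Finset.mem_erase.mp hx).1
        have hxj : x ≠ j := (Finset.mem_erase.mp (Finset.mem_erase.mp hx).2).1
        simp only [hF, hG, hcx x hxi hxj, one_mul]
      rw [hrest]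
      have hGi : G i = W' a ⟨i, hij⟩ * W' b ⟨i, hij⟩ := by simp only [hG]; rw [hfi]
      have hFi : F i = c i ^ 2 * (W' a ⟨i, hij⟩ * W' b ⟨i, hij⟩) := by
        simp only [hF]; rw [hfi]; ring
      have hFj : F j = c j ^ 2 * (W' a ⟨i, hij⟩ * W' b ⟨i, hij⟩) := by
        simp only [hF]; rw [hfj]; ring
      rw [hGi, hFi, hFj]
      rcases eq_or_ne (C i + C j) 0 with hs | hs
      · rw [hzero hs a]; ring
      · rw [← add_assoc, ← add_mul, show c j ^ 2 + c i ^ 2 = 1 by linarith [hcsum hs]]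
        ring
    rw [key]
    have := congrFun (congrFun hW' a) b
    simpa [Matrix.mul_apply, Matrix.transpose_apply] using this
  · intro x
    simp only [Matrix.of_apply]
    rcases eq_or_ne x i with hxi | hxi
    · subst hxi
      have hsum2 : ∑ a, (c x * W' a (f x)) * (c x * W' a (f x))
          = c x ^ 2 * ∑ a, W' a (f x) * W' a (f x) := by
        rw [Finset.mul_sum]; exact Finset.sum_congr rfl fun a _ => by ring
      rw [hsum2, hfi, hcoli]
      rcases eq_or_ne (C x + C j) 0 with hs | hs
      · have hCi : C x = 0 := by have := h0 x; have := h0 j; linarith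
        rw [hs, hCi, mul_zero]
      · rw [hci, Real.sq_sqrt (div_nonneg (h0 x) hs0), div_mul_cancel₀ _ hs]
    rcases eq_or_ne x j with hxj | hxj
    · subst hxj
      have hsum2 : ∑ a, (c x * W' a (f x)) * (c x * W' a (f x))
          = c x ^ 2 * ∑ a, W' a (f x) * W' a (f x) := by
        rw [Finset.mul_sum]; exact Finset.sum_congr rfl fun a _ => by ring
      rw [hsum2, hfj, hcoli]
      rcases eq_or_ne (C i + C x) 0 with hs | hs
      · have hCj : C x = 0 := by have := h0 x; have := h0 i; linarith
        rw [hs, hCj, mul_zero]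
      · rw [hcj, Real.sq_sqrt (div_nonneg (h0 x) hs0), div_mul_cancel₀ _ hs]
    · have h := hcol ⟨x, hxj⟩
      rw [if_neg hxi] at h
      rw [← h]
      refine Finset.sum_congr rfl fun a _ => ?_
      rw [hcx x hxi hxj, hfx x hxj, one_mul]
lemma key_exists : ∀ (n : ℕ) (ι : Type) [Fintype ι] [DecidableEq ι],
    Fintype.card ι = n → ∀ (D : ℕ), D ≤ n → ∀ C : ι → ℝ,
    (∀ x, 0 ≤ C x) → (∀ x, C x ≤ 1) → ∑ x, C x = (D : ℝ) →
    ∃ W : Matrix (Fin D) ι ℝ, W * Wᵀ = 1 ∧ ∀ x, ∑ a, W a x * W a x = C x := by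
  intro n
  induction n using Nat.strong_induction_on with
  | _ n IH =>
  intro ι _ _ hcard D hD C h0 h1 hsum
  rcases Nat.eq_zero_or_pos D with hD0 | hDpos
  · -- D = 0 : all C are zero, empty matrix
    subst hD0
    have hCz : ∀ x, C x = 0 := by
      intro x
      have := Finset.sum_eq_zero_iff_of_nonneg (fun y (_ : y ∈ Finset.univ) => h0 y) |>.mp
        (by simpa using hsum) x (Finset.mem_univ x)
      exact this
    refine ⟨fun a _ => 0, Subsingleton.elim _ _, fun x => by simp [hCz x]⟩
  rcases eq_or_lt_of_le hD with hDn | hDlt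
  · -- D = n : all C are 1, permutation-like matrix
    have hC1 : ∀ x, C x = 1 := by
      intro x
      have hz : ∑ y, (1 - C y) = 0 := by
        rw [Finset.sum_sub_distrib, hsum]
        simp [hcard, hDn]
      have := Finset.sum_eq_zero_iff_of_nonneg
        (fun y (_ : y ∈ Finset.univ) => by linarith [h1 y]) |>.mp hz x (Finset.mem_univ x)
      linarith
    have e : ι ≃ Fin D := Fintype.equivFinOfCardEq (by rw [hcard, hDn])
    refine ⟨Matrix.of fun a x => if e x = a then 1 else 0, ?_, ?_⟩
    · ext a b
      simp only [Matrix.mul_apply, Matrix.transpose_apply, Matrix.of_apply]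
      rw [Fintype.sum_equiv e _ (fun y => (if y = a then (1:ℝ) else 0) * (if y = b then 1 else 0))
        (fun x => rfl)]
      by_cases h : a = b
      · subst h; simp [Matrix.one_apply]
      · simp [Matrix.one_apply, h, Finset.sum_ite_eq]
        intro hh; exact h hh.symm
    · intro x
      rw [hC1 x]
      simp only [Matrix.of_apply]
      rw [Finset.sum_eq_single (e x)]
      · simp
      · intro b _ hb
        rw [if_neg (fun h => hb h.symm), zero_mul]
      · intro h; exact absurd (Finset.mem_univ _) h
  · -- 0 < D < n
    have hn2 : 2 ≤ n := by omega
    -- merge machinery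
    have merge : ∀ (D'' : ℕ), D'' ≤ n - 1 → ∀ (Cm : ι → ℝ), (∀ x, 0 ≤ Cm x) → (∀ x, Cm x ≤ 1) →
        (∑ x, Cm x = (D'' : ℝ)) → ∀ p q : ι, p ≠ q → Cm p + Cm q ≤ 1 →
        ∃ W : Matrix (Fin D'') ι ℝ, W * Wᵀ = 1 ∧ ∀ x, ∑ a, W a x * W a x = Cm x := by
      intro D'' hD'' Cm hm0 hm1 hmsum p q hpq hpq1
      have hcard' : Fintype.card {x : ι // x ≠ q} = n - 1 := by
        rw [Fintype.card_subtype_compl, Fintype.card_subtype_eq, hcard]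
      set C'' : {x : ι // x ≠ q} → ℝ := fun x => if (x : ι) = p then Cm p + Cm q else Cm x
        with hC''
      have hsum'' : ∑ x, C'' x = (D'' : ℝ) := by
        rw [← hmsum]
        have h1' : ∑ x : {x : ι // x ≠ q}, C'' x
            = ∑ x ∈ Finset.univ.erase q, (if x = p then Cm p + Cm q else Cm x) := by
          rw [Finset.sum_subtype (Finset.univ.erase q) (p := fun x => x ≠ q) (fun x => by simp)
            (fun x => if x = p then Cm p + Cm q else Cm x)]
        have hpmem : p ∈ (Finset.univ : Finset ι).erase q :=
          Finset.mem_erase.mpr ⟨hpq, Finset.mem_univ p⟩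
        rw [h1', ← Finset.add_sum_erase _ _ hpmem, if_pos rfl]
        have hrest : ∑ x ∈ (Finset.univ.erase q).erase p, (if x = p then Cm p + Cm q else Cm x)
            = ∑ x ∈ (Finset.univ.erase q).erase p, Cm x := by
          refine Finset.sum_congr rfl fun x hx => ?_
          rw [if_neg (Finset.mem_erase.mp hx).1]
        rw [hrest]
        rw [← Finset.add_sum_erase _ Cm (Finset.mem_univ q),
          ← Finset.add_sum_erase _ Cm (Finset.mem_erase.mpr ⟨hpq, Finset.mem_univ p⟩)]
        ring
      obtain ⟨W', hW'1, hW'2⟩ := IH (n-1) (by omega) {x : ι // x ≠ q} hcard' D'' hD'' C''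
        (fun x => by by_cases h : (x:ι) = p <;> simp [hC'', h] <;>
          [exact add_nonneg (hm0 p) (hm0 q); exact hm0 x])
        (fun x => by by_cases h : (x:ι) = p <;> simp [hC'', h] <;>
          [exact hpq1; exact hm1 x]) hsum''
      exact split_step Cm hm0 p q hpq W' hW'1 (fun x => hW'2 x)
    by_cases hpair : ∃ p q : ι, p ≠ q ∧ C p + C q ≤ 1
    · obtain ⟨p, q, hpq, hpq1⟩ := hpair
      exact merge D (by omega) C h0 h1 hsum p q hpq hpq1
    · push_neg at hpair
      obtain ⟨p, q, hpq⟩ := Fintype.exists_pair_of_one_lt_card (by omega : 1 < Fintype.card ι)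
      have hgt := hpair p q hpq
      have hsum' : ∑ x, (1 - C x) = ((n - D : ℕ) : ℝ) := by
        rw [Finset.sum_sub_distrib, hsum, Nat.cast_sub hD]
        simp [hcard]
      obtain ⟨V, hV1, hV2⟩ := merge (n - D) (by omega) (fun x => 1 - C x)
        (fun x => sub_nonneg.mpr (h1 x)) (fun x => sub_le_self 1 (h0 x)) hsum' p q hpq
        (by show 1 - C p + (1 - C q) ≤ 1; linarith)
      obtain ⟨W, hW1, hW2⟩ := complement_exists (d := n - D) (e := D)
        (by rw [hcard]; omega) V hV1
      refine ⟨W, hW1, fun x => ?_⟩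
      rw [hW2 x, hV2 x]
      ring

/-- For positive integers `D ≤ N` and reals `0 ≤ C_i ≤ 1` with
`∑ i, C_i = D`, there is a `D × N` semiorthogonal matrix `W` (`W Wᵀ = I`) whose `i`-th
column `w_i` satisfies `‖w_i‖² = C_i`; in particular `C_i(W) = C_i` for all `i`. -/
theorem exists_semiorthogonal_of_capacities
    {D N : ℕ} (hDpos : 0 < D) (hNpos : 0 < N) (hDN : D ≤ N)
    (C : Fin N → ℝ) (hC0 : ∀ i, 0 ≤ C i) (hC1 : ∀ i, C i ≤ 1)
    (hsum : ∑ i, C i = (D : ℝ)) :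
    ∃ W : Matrix (Fin D) (Fin N) ℝ, W * Wᵀ = 1 ∧
      (∀ i, ∑ a, W a i * W a i = C i) ∧ (∀ i, capacity W i = C i) := by
  obtain ⟨W, hW1, hW2⟩ := key_exists N (Fin N) (by simp) D hDN C hC0 hC1 hsum
  refine ⟨W, hW1, hW2, fun i => ?_⟩
  unfold capacity
  rw [sum_inner_sq_eq W hW1 i, hW2 i]
  rcases eq_or_ne (C i) 0 with h | h
  · rw [h]; simp
  · rw [sq, mul_div_assoc, div_self h, mul_one]
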